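/- Let K be a finitely generated field extension of the finite field F_p. Then there exists a constant c such that for every m ∈ ℕ and every finite field extension L of K with [L:K] ≤ m, the number of roots of unity in L is at most c^m. -/

import Mathlib

open Polynomial IntermediateField

/-- Coefficients of the minimal polynomial over a middle field of an element integral over
the base field are integral over the base field. -/
lemma minpoly_coeff_isIntegral {F K L : Type*} [Field F] [Field K] [Field L]
    [Algebra F K] [Algebra K L] [Algebra F L] [IsScalarTower F K L]
    {x : L} (hx : IsIntegral F x) (n : ℕ) : IsIntegral F ((minpoly K x).coeff n) := by
  have hxK : IsIntegral K x := hx.tower_top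
  have hdvd : minpoly K x ∣ (minpoly F x).map (algebraMap F K) :=
    minpoly.dvd K x (by rw [aeval_map_algebraMap]; exact minpoly.aeval F x)
  have hmem := integralClosure.mem_lifts_of_monic_of_dvd_map (K := K)
    (minpoly.monic hx) (minpoly.monic hxK) hdvd
  rw [lifts_iff_coeff_lifts] at hmem
  obtain ⟨c, hc⟩ := hmem n
  have : (c : K) ∈ integralClosure F K := c.2
  rw [← hc]; exact c.2

/-- If `x` is transcendental over `F`, then every element of `F⟮x⟯` that is algebraic
over `F` lies in (the image of) `F`. -/
lemma mem_bot_of_isAlgebraic_of_transcendental {F E : Type*} [Field F] [Field E] [Algebra F E]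
    {x : E} (hx : ¬ IsAlgebraic F x) {y : E} (hy : y ∈ F⟮x⟯) (hya : IsAlgebraic F y) :
    y ∈ (⊥ : IntermediateField F E) := by
  by_contra hy0
  obtain ⟨f, g, hfg⟩ := (IntermediateField.mem_adjoin_simple_iff F y).mp hy
  by_cases hgx : Polynomial.aeval x g = 0
  · exact hy0 (by simp only [hfg, hgx, div_zero]; exact zero_mem _)
  have hg0 : g ≠ 0 := fun h => hgx (by simp [h])
  -- work over F⟮y⟯
  set Fy := F⟮y⟯
  have hyint : IsIntegral F y := hya.isIntegral
  haveI : FiniteDimensional F Fy := IntermediateField.adjoin.finiteDimensional hyint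
  set y' : Fy := IntermediateField.AdjoinSimple.gen F y with hy'
  have hyE : (algebraMap Fy E) y' = y := rfl
  set h : Polynomial Fy := f.map (algebraMap F Fy) - Polynomial.C y' * g.map (algebraMap F Fy)
    with hdef
  have hh0 : h ≠ 0 := by
    intro h0
    have heq : f.map (algebraMap F Fy) = Polynomial.C y' * g.map (algebraMap F Fy) := by
      rw [hdef] at h0; rwa [sub_eq_zero] at h0
    obtain ⟨i, hi⟩ : ∃ i, g.coeff i ≠ 0 := by
      by_contra hc
      push_neg at hc
      exact hg0 (Polynomial.ext fun i => by simp [hc i])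
    have hcoeff : algebraMap F Fy (f.coeff i) = y' * algebraMap F Fy (g.coeff i) := by
      simpa using congrArg (fun q => Polynomial.coeff q i) heq
    have hE := congrArg (algebraMap Fy E) hcoeff
    rw [map_mul, hyE, ← IsScalarTower.algebraMap_apply, ← IsScalarTower.algebraMap_apply] at hE
    have hgi : algebraMap F E (g.coeff i) ≠ 0 := by
      simpa using hi
    apply hy0
    rw [IntermediateField.mem_bot]
    refine ⟨f.coeff i / g.coeff i, ?_⟩
    rw [map_div₀, hE, mul_div_assoc, div_self hgi, mul_one]
  have hroot : Polynomial.aeval x h = 0 := by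
    have h1 : Polynomial.aeval x (f.map (algebraMap F Fy)) = Polynomial.aeval x f :=
      Polynomial.aeval_map_algebraMap (R := F) Fy x f
    have h2 : Polynomial.aeval x (g.map (algebraMap F Fy)) = Polynomial.aeval x g :=
      Polynomial.aeval_map_algebraMap (R := F) Fy x g
    rw [hdef, map_sub, map_mul, Polynomial.aeval_C, h1, h2, hyE, hfg,
      div_mul_cancel₀ _ hgx, sub_self]
  have halg : IsAlgebraic Fy x := ⟨h, hh0, hroot⟩
  have : IsAlgebraic F x :=
    (isIntegral_trans (R := F) (A := Fy) x halg.isIntegral).isAlgebraic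
  exact hx this

/-- In a finitely generated field extension of a finite field, the set of elements integral
over the base field is finite. -/
lemma finite_setOf_isIntegral {F K : Type*} [Field F] [Finite F] [Field K] [Algebra F K]
    (hK : ∃ s : Finset K, IntermediateField.adjoin F (s : Set K) = ⊤) :
    {x : K | IsIntegral F x}.Finite := by
  classical
  obtain ⟨s, hs⟩ := hK
  have main : ∀ M : IntermediateField F K, M.FG → {x : K | x ∈ M ∧ IsIntegral F x}.Finite := by
    intro M hMfg
    refine IntermediateField.induction_on_adjoin_fg
      (fun M => {x : K | x ∈ M ∧ IsIntegral F x}.Finite) ?base ?ih M hMfg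
    case base =>
      have : {x : K | x ∈ (⊥ : IntermediateField F K) ∧ IsIntegral F x} ⊆
          Set.range (algebraMap F K) := by
        intro y hy
        exact IntermediateField.mem_bot.mp hy.1
      exact (Set.finite_range _).subset this
    case ih =>
      intro M x hM
      by_cases halg : IsAlgebraic M x
      · -- algebraic case
        haveI : FiniteDimensional M (IntermediateField.adjoin M {x}) :=
          IntermediateField.adjoin.finiteDimensional halg.isIntegral
        set r := Module.finrank M (IntermediateField.adjoin M {x}) with hr
        set θ : K → (Fin (r + 1) → K) :=
          fun y i => algebraMap M K ((minpoly M y).coeff i) with hθ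
        set A' : Set K := {y : K | y ∈ (M⟮x⟯).restrictScalars F ∧ IsIntegral F y} with hA'
        -- degrees of minimal polynomials are at most r
        have hdeg : ∀ y ∈ A', (minpoly M y).natDegree ≤ r := by
          intro y hy
          have hymem : y ∈ M⟮x⟯ := hy.1
          have : minpoly M (algebraMap (M⟮x⟯) K ⟨y, hymem⟩) = minpoly M (⟨y, hymem⟩ : M⟮x⟯) :=
            minpoly.algebraMap_eq (algebraMap (M⟮x⟯) K).injective _
          have h2 : minpoly M y = minpoly M (⟨y, hymem⟩ : M⟮x⟯) := this
          rw [h2]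
          haveI : Module.Free M (M⟮x⟯) := Module.Free.of_divisionRing _ _
          exact minpoly.natDegree_le _
        -- the tuple of coefficients lands in a finite set
        have hθmem : ∀ y ∈ A', θ y ∈ Set.pi Set.univ
            (fun _ : Fin (r + 1) => {z : K | z ∈ M ∧ IsIntegral F z}) := by
          intro y hy i _
          have hyint : IsIntegral F y := hy.2
          refine ⟨((minpoly M y).coeff i : M).2, ?_⟩
          have := minpoly_coeff_isIntegral (K := M) (L := K) hyint i
          exact this.map M.val
        have hT : (Set.pi Set.univ
            (fun _ : Fin (r + 1) => {z : K | z ∈ M ∧ IsIntegral F z})).Finite :=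
          Set.Finite.pi fun _ => hM
        have hsub : A' ⊆ ⋃ t ∈ Set.pi Set.univ
            (fun _ : Fin (r + 1) => {z : K | z ∈ M ∧ IsIntegral F z}),
            (A' ∩ θ ⁻¹' {t}) := by
          intro y hy
          exact Set.mem_biUnion (hθmem y hy) ⟨hy, rfl⟩
        refine Set.Finite.subset (Set.Finite.biUnion hT fun t _ => ?_) hsub
        rcases Set.eq_empty_or_nonempty (A' ∩ θ ⁻¹' {t}) with he | ⟨y₀, hy₀⟩
        · simp [he]
        have hy₀int : IsIntegral M y₀ := (hy₀.1.2).tower_top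
        have hne : (minpoly M y₀).map (algebraMap M K) ≠ 0 :=
          Polynomial.map_ne_zero (minpoly.ne_zero hy₀int)
        refine Set.Finite.subset (Polynomial.finite_setOf_isRoot hne) ?_
        intro y hy
        have hmineq : minpoly M y = minpoly M y₀ := by
          apply Polynomial.ext
          intro i
          rcases le_or_gt i r with hi | hi
          · have : θ y = θ y₀ := by
              have h1 : θ y = t := hy.2
              have h2 : θ y₀ = t := hy₀.2
              rw [h1, h2]
            have := congrFun this ⟨i, Nat.lt_succ_of_le hi⟩
            simp only [hθ] at this
            exact_mod_cast (algebraMap M K).injective this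
          · rw [Polynomial.coeff_eq_zero_of_natDegree_lt (lt_of_le_of_lt (hdeg y hy.1) hi),
              Polynomial.coeff_eq_zero_of_natDegree_lt (lt_of_le_of_lt (hdeg y₀ hy₀.1) hi)]
        show Polynomial.IsRoot _ y
        rw [Polynomial.IsRoot, Polynomial.eval_map, ← Polynomial.aeval_def, ← hmineq]
        exact minpoly.aeval M y
      · -- transcendental case
        refine hM.subset ?_
        intro y hy
        have hyM : IsAlgebraic M y := ((hy.2).tower_top (A := M)).isAlgebraic
        have := mem_bot_of_isAlgebraic_of_transcendental halg hy.1 hyM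
        obtain ⟨z, rfl⟩ := IntermediateField.mem_bot.mp this
        exact ⟨z.2, hy.2⟩
  have := main ⊤ ⟨s, hs⟩
  refine this.subset fun y hy => ⟨IntermediateField.mem_top, hy⟩

lemma geom_sum_lt_pow {p : ℕ} (hp : 2 ≤ p) : ∀ N : ℕ, (∑ d ∈ Finset.Icc 1 N, p ^ d) < p ^ (N + 1)
  | 0 => by simpa using Nat.lt_of_lt_of_le Nat.zero_lt_two hp
  | N + 1 => by
    rw [Finset.sum_Icc_succ_top (by omega)]
    have h1 := geom_sum_lt_pow hp N
    have h2 : p ^ (N + 1) + p ^ (N + 1) ≤ p ^ (N + 1 + 1) := by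
      have : 2 * p ^ (N + 1) ≤ p * p ^ (N + 1) := Nat.mul_le_mul_right _ hp
      calc p ^ (N + 1) + p ^ (N + 1) = 2 * p ^ (N + 1) := by ring
        _ ≤ p * p ^ (N + 1) := this
        _ = p ^ (N + 1 + 1) := by ring
    omega

universe u

set_option maxHeartbeats 1000000 in
theorem stmt12 {p : ℕ} [Fact p.Prime] {K : Type u} [Field K] [Algebra (ZMod p) K]
    (hK : ∃ s : Finset K, IntermediateField.adjoin (ZMod p) (s : Set K) = ⊤) :
    ∃ c : ℕ, ∀ (m : ℕ) (L : Type u) (_ : Field L) (_ : Algebra K L),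
      FiniteDimensional K L → Module.finrank K L ≤ m →
        {x : L | ∃ n : ℕ, 0 < n ∧ x ^ n = 1}.Finite ∧
          {x : L | ∃ n : ℕ, 0 < n ∧ x ^ n = 1}.ncard ≤ c ^ m := by
  classical
  have hp2 : 2 ≤ p := (Fact.out : p.Prime).two_le
  have hEfin : {x : K | IsIntegral (ZMod p) x}.Finite := finite_setOf_isIntegral hK
  set E : IntermediateField (ZMod p) K := algebraicClosure (ZMod p) K with hE
  haveI : Finite ↥E := hEfin.to_subtype
  set e := Module.finrank (ZMod p) ↥E with he
  have he1 : 1 ≤ e := Module.finrank_pos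
  refine ⟨p ^ (e + 1), ?_⟩
  intro m L _ _ hfd hm
  letI : Algebra (ZMod p) L := ((algebraMap K L).comp (algebraMap (ZMod p) K)).toAlgebra
  haveI : IsScalarTower (ZMod p) K L := IsScalarTower.of_algebraMap_eq fun x => rfl
  have hm1 : 1 ≤ m := le_trans Module.finrank_pos hm
  set N := e * m with hN
  set Q : Polynomial L := ∏ d ∈ Finset.Icc 1 N, (Polynomial.X ^ p ^ d - Polynomial.X) with hQ
  have hfac : ∀ d ∈ Finset.Icc 1 N, (Polynomial.X ^ p ^ d - Polynomial.X : Polynomial L).Monic := by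
    intro d hd
    apply Polynomial.monic_X_pow_sub
    rw [Polynomial.degree_X]
    have hd1 : 1 ≤ d := (Finset.mem_Icc.mp hd).1
    exact_mod_cast Nat.one_lt_pow (by omega) hp2
  have hfacdeg : ∀ d ∈ Finset.Icc 1 N,
      (Polynomial.X ^ p ^ d - Polynomial.X : Polynomial L).natDegree = p ^ d := by
    intro d hd
    rw [Polynomial.natDegree_sub_eq_left_of_natDegree_lt, Polynomial.natDegree_X_pow]
    rw [Polynomial.natDegree_X, Polynomial.natDegree_X_pow]
    have hd1 : 1 ≤ d := (Finset.mem_Icc.mp hd).1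
    exact Nat.one_lt_pow (by omega) hp2
  have hQmonic : Q.Monic := Polynomial.monic_prod_of_monic _ _ hfac
  have hQ0 : Q ≠ 0 := hQmonic.ne_zero
  -- main inclusion
  have hsub : {x : L | ∃ n : ℕ, 0 < n ∧ x ^ n = 1} ⊆ {x : L | Q.IsRoot x} := by
    rintro ζ ⟨n, hn, hζn⟩
    have hζF : IsIntegral (ZMod p) ζ := by
      refine ⟨Polynomial.X ^ n - Polynomial.C 1, Polynomial.monic_X_pow_sub_C 1 hn.ne', ?_⟩
      simp [hζn]
    have hζK : IsIntegral K ζ := hζF.tower_top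
    set g := minpoly K ζ with hg
    have hg_m : g.natDegree ≤ m := le_trans (minpoly.natDegree_le ζ) hm
    -- the image of E in L
    set f : K →ₐ[ZMod p] L := IsScalarTower.toAlgHom (ZMod p) K L with hf
    set T := E.map f with hT
    haveI : FiniteDimensional (ZMod p) ↥T :=
      LinearEquiv.finiteDimensional (IntermediateField.equivMap E f).toLinearEquiv
    have hTe : Module.finrank (ZMod p) ↥T = e :=
      ((IntermediateField.equivMap E f).toLinearEquiv.finrank_eq).symm
    -- lift the minimal polynomial of ζ over K to T
    have hlift : g.map (algebraMap K L) ∈ Polynomial.lifts (algebraMap ↥T L) := by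
      rw [Polynomial.lifts_iff_coeff_lifts]
      intro i
      refine ⟨⟨algebraMap K L (g.coeff i), ?_⟩, by simp [Polynomial.coeff_map]⟩
      exact ⟨g.coeff i, minpoly_coeff_isIntegral hζF i, rfl⟩
    obtain ⟨q, hqmap, hqdeg, hqmonic⟩ :=
      Polynomial.lifts_and_degree_eq_and_monic hlift ((minpoly.monic hζK).map _)
    have haevalq : Polynomial.aeval ζ q = 0 := by
      have h1 : Polynomial.aeval ζ q = Polynomial.eval ζ (q.map (algebraMap ↥T L)) := by
        rw [Polynomial.aeval_def, Polynomial.eval_map]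
      rw [h1, hqmap, Polynomial.eval_map, ← Polynomial.aeval_def]
      exact minpoly.aeval K ζ
    have hζT : IsIntegral ↥T ζ := hζF.tower_top
    have hdq : (minpoly ↥T ζ).natDegree ≤ g.natDegree := by
      have h1 : (minpoly ↥T ζ).natDegree ≤ q.natDegree :=
        Polynomial.natDegree_le_of_dvd (minpoly.dvd ↥T ζ haevalq) hqmonic.ne_zero
      have h2 : q.natDegree = g.natDegree := by
        have := Polynomial.natDegree_eq_of_degree_eq hqdeg
        rwa [Polynomial.natDegree_map] at this
      omega
    -- the compositum T(ζ)
    set W := IntermediateField.adjoin ↥T ({ζ} : Set L) with hW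
    haveI : IsScalarTower (ZMod p) ↥W L := IsScalarTower.of_algebraMap_eq fun x => rfl
    haveI : FiniteDimensional ↥T ↥W := IntermediateField.adjoin.finiteDimensional hζT
    haveI : FiniteDimensional (ZMod p) ↥W := FiniteDimensional.trans (ZMod p) ↥T ↥W
    have hWrank : Module.finrank (ZMod p) ↥W ≤ e * m := by
      have h1 : Module.finrank (ZMod p) ↥T * Module.finrank ↥T ↥W
          = Module.finrank (ZMod p) ↥W :=
          haveI : Module.Free ↥T ↥W := Module.Free.of_divisionRing _ _
          Module.finrank_mul_finrank _ _ _
      have h2 : Module.finrank ↥T ↥W = (minpoly ↥T ζ).natDegree :=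
        IntermediateField.adjoin.finrank hζT
      rw [← h1, hTe, h2]
      exact Nat.mul_le_mul le_rfl (le_trans hdq hg_m)
    -- degree of ζ over the prime field
    set dd := (minpoly (ZMod p) ζ).natDegree with hdd
    have hζW : ζ ∈ W := IntermediateField.subset_adjoin _ _ rfl
    have hdle : dd ≤ N := by
      have hmineq : minpoly (ZMod p) (algebraMap ↥W L ⟨ζ, hζW⟩)
          = minpoly (ZMod p) (⟨ζ, hζW⟩ : ↥W) :=
        minpoly.algebraMap_eq (algebraMap ↥W L).injective _
      have : dd = (minpoly (ZMod p) (⟨ζ, hζW⟩ : ↥W)).natDegree := by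
        rw [hdd, ← hmineq]; rfl
      rw [this]
      exact le_trans (minpoly.natDegree_le _) hWrank
    have hd1 : 1 ≤ dd := minpoly.natDegree_pos hζF
    -- Frobenius
    have hfrob : ζ ^ p ^ dd = ζ := by
      set V := IntermediateField.adjoin (ZMod p) ({ζ} : Set L) with hV
      haveI : FiniteDimensional (ZMod p) ↥V := IntermediateField.adjoin.finiteDimensional hζF
      haveI : Finite ↥V := Module.finite_of_finite (ZMod p)
      haveI : Fintype ↥V := Fintype.ofFinite _
      have hcard : Fintype.card ↥V = p ^ dd := by
        rw [Module.card_eq_pow_finrank (K := ZMod p) (V := ↥V), ZMod.card,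
          IntermediateField.adjoin.finrank hζF]
      set gen : ↥V := IntermediateField.AdjoinSimple.gen (ZMod p) ζ with hgen
      have := FiniteField.pow_card gen
      rw [hcard] at this
      have hcoe := congrArg (algebraMap ↥V L) this
      rwa [map_pow] at hcoe
    -- ζ is a root of Q
    show Q.IsRoot ζ
    rw [Polynomial.IsRoot, hQ, Polynomial.eval_prod]
    refine Finset.prod_eq_zero (Finset.mem_Icc.mpr ⟨hd1, hdle⟩) ?_
    simp [hfrob]
  -- counting
  have hRfin : {x : L | Q.IsRoot x}.Finite := Polynomial.finite_setOf_isRoot hQ0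
  have hSfin : {x : L | ∃ n : ℕ, 0 < n ∧ x ^ n = 1}.Finite := hRfin.subset hsub
  refine ⟨hSfin, ?_⟩
  have hdegQ : Q.natDegree = ∑ d ∈ Finset.Icc 1 N, p ^ d := by
    rw [hQ, Polynomial.natDegree_prod _ _ fun d hd => (hfac d hd).ne_zero]
    exact Finset.sum_congr rfl hfacdeg
  have hcount : {x : L | Q.IsRoot x}.ncard ≤ Q.natDegree := by
    rw [Set.ncard_eq_toFinset_card _ hRfin]
    have hss : hRfin.toFinset ⊆ Q.roots.toFinset := by
      intro x hx
      rw [Set.Finite.mem_toFinset] at hx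
      rw [Multiset.mem_toFinset, Polynomial.mem_roots hQ0]
      exact hx
    calc hRfin.toFinset.card ≤ Q.roots.toFinset.card := Finset.card_le_card hss
      _ ≤ Multiset.card Q.roots := Multiset.toFinset_card_le _
      _ ≤ Q.natDegree := Polynomial.card_roots' Q
  calc {x : L | ∃ n : ℕ, 0 < n ∧ x ^ n = 1}.ncard
      ≤ {x : L | Q.IsRoot x}.ncard := Set.ncard_le_ncard hsub hRfin
    _ ≤ Q.natDegree := hcount
    _ = ∑ d ∈ Finset.Icc 1 N, p ^ d := hdegQ
    _ ≤ p ^ (N + 1) := (geom_sum_lt_pow hp2 N).le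
    _ ≤ (p ^ (e + 1)) ^ m := by
        rw [← pow_mul]
        apply Nat.pow_le_pow_right (by omega)
        rw [hN]
        nlinarith
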